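/- Let A be a Cartan matrix of type (q₁,q₂,q₃) with respect to (p₁,p₂,p₃), let γ_i denote the i-th row of A regarded as a linear functional on ℝ³, let e₁,e₂,e₃ be the standard basis of ℝ³, and set σ_i = e_i⊗γ_i − 1. Then each σ_i lies in SL(3,ℝ), σ_i² = 1, the σ_i are pairwise distinct and different from the identity, and (σ₂σ₃)^{p₁} = (σ₃σ₁)^{p₂} = (σ₁σ₂)^{p₃} = 1. Consequently there is a (unique) group homomorphism ρ_A from the Coxeter group Γ_{p₁,p₂,p₃} to SL(3,ℝ) with ρ_A(s_i) = σ_i for i = 1,2,3. -/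

import Mathlib

open Matrix

/-- A real 3×3 matrix `A` is a Cartan matrix of type `(q₁,q₂,q₃)` with respect to
`(p₁,p₂,p₃)` (indices shifted to `0,1,2`): diagonal entries `2`,
`A i j * A j i = 4cos²(q_k π / p_k)` for `{i,j,k} = {0,1,2}`, and
`A i j = 0 → A j i = 0`. -/
def IsCartanMatrix (p q : Fin 3 → ℕ) (A : Matrix (Fin 3) (Fin 3) ℝ) : Prop :=
  (∀ i, A i i = 2) ∧
  (∀ i j k : Fin 3, i ≠ j → j ≠ k → i ≠ k →
    A i j * A j i = 4 * Real.cos ((q k : ℝ) * Real.pi / (p k : ℝ)) ^ 2) ∧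
  (∀ i j, A i j = 0 → A j i = 0)

/-- The Coxeter matrix of the triangle group `Γ_{p₁,p₂,p₃}`:
`s_i s_j` has order `p_k` for `{i,j,k} = {0,1,2}` (note `-(i+j)` is the third index). -/
def triangleCoxeterMatrix (p : Fin 3 → ℕ) (hp : ∀ k, 2 ≤ p k) : CoxeterMatrix (Fin 3) where
  M := Matrix.of fun i j => if i = j then 1 else p (-(i + j))
  isSymm := by
    show _ = _
    ext i j
    by_cases hij : i = j
    · simp [hij]
    · simp [hij, Ne.symm hij, add_comm]
  diagonal i := by simp
  off_diagonal i j hij := by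
    have h2 := hp (-(i + j))
    simp only [Matrix.of_apply, if_neg hij]
    omega


private lemma key_pow (P : Matrix (Fin 3) (Fin 3) ℝ) (p q : ℕ) (hq1 : 1 ≤ q) (hqp : 2 * q ≤ p)
    (t : ℝ) (ht : t = 2 * Real.cos (2 * q * Real.pi / p))
    (hcube : P * P * P = (t + 1) • (P * P) - (t + 1) • P + 1)
    (hdeg : 2 * q = p → P * P = 1) :
    P ^ p = 1 := by
  rcases eq_or_lt_of_le hqp with heq | hlt
  · rw [← heq, pow_mul, sq, hdeg heq, one_pow]
  · have hp0 : 0 < p := by omega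
    have hπ := Real.pi_pos
    set φ : ℝ := 2 * q * Real.pi / p with hφ
    have hq0 : (0:ℝ) < q := by exact_mod_cast hq1
    have hp0' : (0:ℝ) < p := by exact_mod_cast hp0
    have hφ0 : 0 < φ := by
      rw [hφ]; positivity
    have hφπ : φ < Real.pi := by
      rw [hφ, div_lt_iff₀ hp0']
      have h2q : (2 * q : ℝ) < p := by exact_mod_cast hlt
      nlinarith
    have hs : 0 < Real.sin φ := Real.sin_pos_of_pos_of_lt_pi hφ0 hφπ
    have hsne : Real.sin φ ≠ 0 := ne_of_gt hs
    have hc1 : Real.cos φ ≠ 1 := by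
      intro h
      have := Real.sin_sq_add_cos_sq φ
      nlinarith
    have htc : t = 2 * Real.cos φ := ht
    have hD : (2:ℝ) - 2 * Real.cos φ ≠ 0 := by
      intro h; apply hc1; linarith
    set a : ℕ → ℝ := fun n => -Real.sin (((n : ℝ) - 1) * φ) / Real.sin φ with ha
    set b : ℕ → ℝ := fun n => Real.sin ((n : ℝ) * φ) / Real.sin φ with hb
    set x : ℕ → ℝ := fun n => (1 + (1 - t) * a n - b n) / (2 - t) with hx
    set y : ℕ → ℝ := fun n => (-t + t * a n + 2 * b n) / (2 - t) with hy
    set z : ℕ → ℝ := fun n => (1 - a n - b n) / (2 - t) with hz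
    have key : ∀ n, P ^ n = x n • (1 : Matrix (Fin 3) (Fin 3) ℝ) + y n • P + z n • (P * P) := by
      intro n
      induction n with
      | zero =>
        have ha0 : a 0 = 1 := by
          simp only [ha, Nat.cast_zero]
          rw [show ((0:ℝ) - 1) * φ = -φ by ring, Real.sin_neg]
          field_simp
        have hb0 : b 0 = 0 := by simp [hb]
        have hx0 : x 0 = 1 := by rw [hx]; simp only; rw [ha0, hb0]; field_simp [htc ▸ hD]; ring
        have hy0 : y 0 = 0 := by rw [hy]; simp only; rw [ha0, hb0]; ring_nf
        have hz0 : z 0 = 0 := by rw [hz]; simp only; rw [ha0, hb0]; ring_nf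
        rw [pow_zero, hx0, hy0, hz0]
        simp
      | succ n ih =>
        have e1 : ((n:ℝ) + 1 - 1) * φ = (n:ℝ) * φ := by ring
        have e2 : ((n:ℝ) + 1) * φ = (n:ℝ) * φ + φ := by ring
        have e3 : ((n:ℝ) - 1) * φ = (n:ℝ) * φ - φ := by ring
        have hDt : (2:ℝ) - t ≠ 0 := by rw [htc]; exact hD
        have hx1 : x (n+1) = z n := by
          rw [hx, hz]; simp only [ha, hb]; push_cast
          rw [e1, e2, e3, Real.sin_add, Real.sin_sub, htc]
          field_simp
          ring
        have hy1 : y (n+1) = x n - (t + 1) * z n := by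
          rw [hy, hx, hz]; simp only [ha, hb]; push_cast
          rw [e1, e2, e3, Real.sin_add, Real.sin_sub, htc]
          field_simp
          ring
        have hz1 : z (n+1) = y n + (t + 1) * z n := by
          rw [hz, hy]; simp only [ha, hb]; push_cast
          rw [e1, e2, e3, Real.sin_add, Real.sin_sub, htc]
          field_simp
          ring
        rw [pow_succ, ih, hx1, hy1, hz1]
        have expand : (x n • (1 : Matrix (Fin 3) (Fin 3) ℝ) + y n • P + z n • (P * P)) * P
            = x n • P + y n • (P * P) + z n • (P * P * P) := by
          simp [add_mul, smul_mul_assoc, mul_assoc]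
        rw [expand, hcube]
        module
    have hpφ : (p:ℝ) * φ = (2 * q : ℕ) * Real.pi := by
      rw [hφ]; push_cast; field_simp
    have hsinp : Real.sin ((p:ℝ) * φ) = 0 := by
      rw [hpφ]; exact Real.sin_nat_mul_pi (2 * q)
    have hcosp : Real.cos ((p:ℝ) * φ) = 1 := by
      rw [hpφ, show ((2 * q : ℕ) : ℝ) * Real.pi = (q:ℝ) * (2 * Real.pi) by push_cast; ring]
      exact_mod_cast Real.cos_nat_mul_two_pi q
    have hap : a p = 1 := by
      rw [ha]; simp only
      rw [show ((p:ℝ) - 1) * φ = (p:ℝ) * φ - φ by ring, Real.sin_sub, hsinp, hcosp]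
      field_simp
      ring
    have hbp : b p = 0 := by rw [hb]; simp only [hsinp, zero_div]
    have hxp : x p = 1 := by rw [hx]; simp only; rw [hap, hbp]; field_simp [htc ▸ hD]; ring
    have hyp : y p = 0 := by rw [hy]; simp only; rw [hap, hbp]; ring_nf
    have hzp : z p = 0 := by rw [hz]; simp only; rw [hap, hbp]; ring_nf
    rw [key p, hxp, hyp, hzp]
    simp


set_option maxHeartbeats 2000000 in
private lemma cubic01 (x e u v t : ℝ) (M N : Matrix (Fin 3) (Fin 3) ℝ)
    (hM : M = !![1,x,e; 0,-1,0; 0,0,-1]) (hN : N = !![-1,0,0; u,1,v; 0,0,-1])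
    (ht : t = x * u - 1) :
    M * N * (M * N) * (M * N) = t • (M*N*(M*N)) - t • (M*N) + 1 := by
  have hcases : ∀ i : Fin 3, i = 0 ∨ i = 1 ∨ i = 2 := by decide
  subst ht
  ext r c'
  rcases hcases r with rfl | rfl | rfl <;> rcases hcases c' with rfl | rfl | rfl <;>
    simp [Matrix.mul_apply, Fin.sum_univ_three, Matrix.one_apply, Matrix.vecHead, Matrix.vecTail,
      hM, hN] <;> ring

set_option maxHeartbeats 2000000 in
private lemma cubic12 (u v c d t : ℝ) (M N : Matrix (Fin 3) (Fin 3) ℝ)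
    (hM : M = !![-1,0,0; u,1,v; 0,0,-1]) (hN : N = !![-1,0,0; 0,-1,0; c,d,1])
    (ht : t = v * d - 1) :
    M * N * (M * N) * (M * N) = t • (M*N*(M*N)) - t • (M*N) + 1 := by
  have hcases : ∀ i : Fin 3, i = 0 ∨ i = 1 ∨ i = 2 := by decide
  subst ht
  ext r c'
  rcases hcases r with rfl | rfl | rfl <;> rcases hcases c' with rfl | rfl | rfl <;>
    simp [Matrix.mul_apply, Fin.sum_univ_three, Matrix.one_apply, Matrix.vecHead, Matrix.vecTail,
      hM, hN] <;> ring

set_option maxHeartbeats 2000000 in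
private lemma cubic20 (c d x e t : ℝ) (M N : Matrix (Fin 3) (Fin 3) ℝ)
    (hM : M = !![-1,0,0; 0,-1,0; c,d,1]) (hN : N = !![1,x,e; 0,-1,0; 0,0,-1])
    (ht : t = c * e - 1) :
    M * N * (M * N) * (M * N) = t • (M*N*(M*N)) - t • (M*N) + 1 := by
  have hcases : ∀ i : Fin 3, i = 0 ∨ i = 1 ∨ i = 2 := by decide
  subst ht
  ext r c'
  rcases hcases r with rfl | rfl | rfl <;> rcases hcases c' with rfl | rfl | rfl <;>
    simp [Matrix.mul_apply, Fin.sum_univ_three, Matrix.one_apply, Matrix.vecHead, Matrix.vecTail,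
      hM, hN] <;> ring

set_option maxHeartbeats 1000000 in
private lemma sq01 (e v : ℝ) (M N : Matrix (Fin 3) (Fin 3) ℝ)
    (hM : M = !![1,0,e; 0,-1,0; 0,0,-1]) (hN : N = !![-1,0,0; 0,1,v; 0,0,-1]) :
    M * N * (M * N) = 1 := by
  have hcases : ∀ i : Fin 3, i = 0 ∨ i = 1 ∨ i = 2 := by decide
  ext r c'
  rcases hcases r with rfl | rfl | rfl <;> rcases hcases c' with rfl | rfl | rfl <;>
    simp [Matrix.mul_apply, Fin.sum_univ_three, Matrix.one_apply, Matrix.vecHead, Matrix.vecTail,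
      hM, hN] <;> ring

set_option maxHeartbeats 1000000 in
private lemma sq12 (u c : ℝ) (M N : Matrix (Fin 3) (Fin 3) ℝ)
    (hM : M = !![-1,0,0; u,1,0; 0,0,-1]) (hN : N = !![-1,0,0; 0,-1,0; c,0,1]) :
    M * N * (M * N) = 1 := by
  have hcases : ∀ i : Fin 3, i = 0 ∨ i = 1 ∨ i = 2 := by decide
  ext r c'
  rcases hcases r with rfl | rfl | rfl <;> rcases hcases c' with rfl | rfl | rfl <;>
    simp [Matrix.mul_apply, Fin.sum_univ_three, Matrix.one_apply, Matrix.vecHead, Matrix.vecTail,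
      hM, hN] <;> ring

set_option maxHeartbeats 1000000 in
private lemma sq20 (d x : ℝ) (M N : Matrix (Fin 3) (Fin 3) ℝ)
    (hM : M = !![-1,0,0; 0,-1,0; 0,d,1]) (hN : N = !![1,x,0; 0,-1,0; 0,0,-1]) :
    M * N * (M * N) = 1 := by
  have hcases : ∀ i : Fin 3, i = 0 ∨ i = 1 ∨ i = 2 := by decide
  ext r c'
  rcases hcases r with rfl | rfl | rfl <;> rcases hcases c' with rfl | rfl | rfl <;>
    simp [Matrix.mul_apply, Fin.sum_univ_three, Matrix.one_apply, Matrix.vecHead, Matrix.vecTail,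
      hM, hN] <;> ring

set_option maxHeartbeats 2000000 in
/-- Given a Cartan matrix `A` of type `(q₁,q₂,q₃)` with respect to
`(p₁,p₂,p₃)`, the matrices `σᵢ = eᵢ⊗γᵢ − 1` (with `γᵢ` the `i`-th row of `A`) are
pairwise distinct nontrivial involutions in `SL(3,ℝ)` satisfying the triangle group
relations, and hence induce a unique homomorphism `Γ_{p₁,p₂,p₃} → SL(3,ℝ)` sending the
Coxeter generator `sᵢ` to `σᵢ`. -/
theorem cartan_matrix_gives_coxeter_representation
    (p q : Fin 3 → ℕ) (hp : ∀ k, 2 ≤ p k) (hq : ∀ k, 1 ≤ q k ∧ 2 * q k ≤ p k)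
    (A : Matrix (Fin 3) (Fin 3) ℝ) (hA : IsCartanMatrix p q A)
    (σ : Fin 3 → Matrix (Fin 3) (Fin 3) ℝ)
    (hσ : ∀ i, σ i = Matrix.vecMulVec (fun j => if j = i then 1 else 0) (A i) - 1) :
    (∀ i, (σ i).det = 1) ∧
    (∀ i, σ i * σ i = 1) ∧
    (∀ i j, i ≠ j → σ i ≠ σ j) ∧
    (∀ i, σ i ≠ 1) ∧
    (σ 1 * σ 2) ^ (p 0) = 1 ∧ (σ 2 * σ 0) ^ (p 1) = 1 ∧ (σ 0 * σ 1) ^ (p 2) = 1 ∧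
    (∃! ρ : (triangleCoxeterMatrix p hp).Group →* Matrix.SpecialLinearGroup (Fin 3) ℝ,
      ∀ i, ((ρ ((triangleCoxeterMatrix p hp).simple i) :
        Matrix (Fin 3) (Fin 3) ℝ)) = σ i) := by
  obtain ⟨hd, hoff, hz⟩ := hA
  have hcases : ∀ i : Fin 3, i = 0 ∨ i = 1 ∨ i = 2 := by decide
  have h0 : σ 0 = !![1, A 0 1, A 0 2; 0, -1, 0; 0, 0, -1] := by
    rw [hσ]; ext r c
    rcases hcases r with rfl | rfl | rfl <;> rcases hcases c with rfl | rfl | rfl <;>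
      simp [Matrix.vecMulVec_apply, Matrix.one_apply, Matrix.vecHead, Matrix.vecTail, hd 0] <;>
      norm_num
  have h1 : σ 1 = !![-1, 0, 0; A 1 0, 1, A 1 2; 0, 0, -1] := by
    rw [hσ]; ext r c
    rcases hcases r with rfl | rfl | rfl <;> rcases hcases c with rfl | rfl | rfl <;>
      simp [Matrix.vecMulVec_apply, Matrix.one_apply, Matrix.vecHead, Matrix.vecTail, hd 1] <;>
      norm_num
  have h2 : σ 2 = !![-1, 0, 0; 0, -1, 0; A 2 0, A 2 1, 1] := by
    rw [hσ]; ext r c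
    rcases hcases r with rfl | rfl | rfl <;> rcases hcases c with rfl | rfl | rfl <;>
      simp [Matrix.vecMulVec_apply, Matrix.one_apply, Matrix.vecHead, Matrix.vecTail, hd 2] <;>
      norm_num
  have hdet : ∀ i, (σ i).det = 1 := by
    intro i
    rcases hcases i with rfl | rfl | rfl
    · rw [h0]; simp [Matrix.det_fin_three, Matrix.vecHead, Matrix.vecTail]
    · rw [h1]; simp [Matrix.det_fin_three, Matrix.vecHead, Matrix.vecTail]
    · rw [h2]; simp [Matrix.det_fin_three, Matrix.vecHead, Matrix.vecTail]
  have hinv : ∀ i, σ i * σ i = 1 := by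
    intro i
    rcases hcases i with rfl | rfl | rfl <;> [rw [h0]; rw [h1]; rw [h2]] <;> ext r c <;>
      rcases hcases r with rfl | rfl | rfl <;> rcases hcases c with rfl | rfl | rfl <;>
        simp [Matrix.mul_apply, Fin.sum_univ_three, Matrix.one_apply, Matrix.vecHead,
          Matrix.vecTail] <;> ring
  have hdist : ∀ i j, i ≠ j → σ i ≠ σ j := by
    intro i j hij hcon
    have e1 : σ i i i = 1 := by
      rw [hσ]
      simp [Matrix.vecMulVec_apply, Matrix.sub_apply, Matrix.one_apply, hd i]
      norm_num
    have e2 : σ j i i = -1 := by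
      rw [hσ]
      simp [Matrix.vecMulVec_apply, Matrix.sub_apply, Matrix.one_apply, hij]
    rw [hcon] at e1
    rw [e1] at e2
    norm_num at e2
  have hsucc : ∀ i : Fin 3, i + 1 ≠ i := by decide
  have hne1 : ∀ i, σ i ≠ 1 := by
    intro i hcon
    have e2 : σ i (i+1) (i+1) = -1 := by
      rw [hσ]
      simp [Matrix.vecMulVec_apply, Matrix.sub_apply, Matrix.one_apply, hsucc i]
    rw [hcon] at e2
    rw [Matrix.one_apply_eq] at e2
    norm_num at e2
  -- the three rotation relations
  have harg : ∀ k : Fin 3, (2 : ℝ) * (q k : ℝ) * Real.pi / (p k : ℝ)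
      = 2 * ((q k : ℝ) * Real.pi / (p k : ℝ)) := by intro k; ring
  have hdeg' : ∀ k : Fin 3, 2 * q k = p k →
      (q k : ℝ) * Real.pi / (p k : ℝ) = Real.pi / 2 := by
    intro k hk
    have hq0 : (q k : ℝ) ≠ 0 := by
      have := (hq k).1; positivity
    rw [← hk]
    push_cast
    field_simp
  have h12 : (σ 1 * σ 2) ^ (p 0) = 1 := by
    refine key_pow _ (p 0) (q 0) (hq 0).1 (hq 0).2 (A 1 2 * A 2 1 - 2) ?_ ?_ ?_
    · rw [harg 0, Real.cos_two_mul, hoff 1 2 0 (by decide) (by decide) (by decide)]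
      ring
    · exact cubic12 (A 1 0) (A 1 2) (A 2 0) (A 2 1) _ _ _ h1 h2 (by ring)
    · intro hk
      have hzero : A 1 2 * A 2 1 = 0 := by
        rw [hoff 1 2 0 (by decide) (by decide) (by decide), hdeg' 0 hk,
          Real.cos_pi_div_two]
        ring
      have hz12 : A 1 2 = 0 ∧ A 2 1 = 0 := by
        rcases mul_eq_zero.mp hzero with h | h
        · exact ⟨h, hz 1 2 h⟩
        · exact ⟨hz 2 1 h, h⟩
      exact sq12 (A 1 0) (A 2 0) _ _ (by rw [h1, hz12.1]) (by rw [h2, hz12.2])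
  have h20 : (σ 2 * σ 0) ^ (p 1) = 1 := by
    refine key_pow _ (p 1) (q 1) (hq 1).1 (hq 1).2 (A 2 0 * A 0 2 - 2) ?_ ?_ ?_
    · rw [harg 1, Real.cos_two_mul, hoff 2 0 1 (by decide) (by decide) (by decide)]
      ring
    · exact cubic20 (A 2 0) (A 2 1) (A 0 1) (A 0 2) _ _ _ h2 h0 (by ring)
    · intro hk
      have hzero : A 2 0 * A 0 2 = 0 := by
        rw [hoff 2 0 1 (by decide) (by decide) (by decide), hdeg' 1 hk,
          Real.cos_pi_div_two]
        ring
      have hz20 : A 2 0 = 0 ∧ A 0 2 = 0 := by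
        rcases mul_eq_zero.mp hzero with h | h
        · exact ⟨h, hz 2 0 h⟩
        · exact ⟨hz 0 2 h, h⟩
      exact sq20 (A 2 1) (A 0 1) _ _ (by rw [h2, hz20.1]) (by rw [h0, hz20.2])
  have h01 : (σ 0 * σ 1) ^ (p 2) = 1 := by
    refine key_pow _ (p 2) (q 2) (hq 2).1 (hq 2).2 (A 0 1 * A 1 0 - 2) ?_ ?_ ?_
    · rw [harg 2, Real.cos_two_mul, hoff 0 1 2 (by decide) (by decide) (by decide)]
      ring
    · exact cubic01 (A 0 1) (A 0 2) (A 1 0) (A 1 2) _ _ _ h0 h1 (by ring)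
    · intro hk
      have hzero : A 0 1 * A 1 0 = 0 := by
        rw [hoff 0 1 2 (by decide) (by decide) (by decide), hdeg' 2 hk,
          Real.cos_pi_div_two]
        ring
      have hz01 : A 0 1 = 0 ∧ A 1 0 = 0 := by
        rcases mul_eq_zero.mp hzero with h | h
        · exact ⟨h, hz 0 1 h⟩
        · exact ⟨hz 1 0 h, h⟩
      exact sq01 (A 0 2) (A 1 2) _ _ (by rw [h0, hz01.1]) (by rw [h1, hz01.2])
  refine ⟨hdet, hinv, hdist, hne1, h12, h20, h01, ?_⟩
  -- lift to the special linear group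
  let S : Fin 3 → Matrix.SpecialLinearGroup (Fin 3) ℝ := fun i => ⟨σ i, hdet i⟩
  have hS2 : ∀ i, S i * S i = 1 := by
    intro i
    apply Subtype.coe_injective
    simp only [Matrix.SpecialLinearGroup.coe_mul, Matrix.SpecialLinearGroup.coe_one]
    exact hinv i
  have hpow : ∀ (i j : Fin 3) (n : ℕ), (σ i * σ j) ^ n = 1 → (S i * S j) ^ n = 1 := by
    intro i j n h
    apply Subtype.coe_injective
    simp only [Matrix.SpecialLinearGroup.coe_pow, Matrix.SpecialLinearGroup.coe_mul,
      Matrix.SpecialLinearGroup.coe_one]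
    exact h
  have hswap : ∀ (i j : Fin 3) (n : ℕ), (S i * S j) ^ n = 1 → (S j * S i) ^ n = 1 := by
    intro i j n h
    have hji : S j * S i = (S i * S j)⁻¹ := by
      rw [_root_.mul_inv_rev, inv_eq_of_mul_eq_one_left (hS2 i), inv_eq_of_mul_eq_one_left (hS2 j)]
    rw [hji, inv_pow, h, inv_one]
  have hlift : (triangleCoxeterMatrix p hp).IsLiftable S := by
    intro i j
    by_cases hij : i = j
    · subst hij
      rw [(triangleCoxeterMatrix p hp).diagonal i, pow_one]
      exact hS2 i
    · have hM : (triangleCoxeterMatrix p hp) i j = if i = j then 1 else p (-(i + j)) := rfl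
      rw [hM, if_neg hij]
      rcases hcases i with rfl | rfl | rfl <;> rcases hcases j with rfl | rfl | rfl <;>
        first
          | exact absurd rfl hij
          | (show (S 0 * S 1) ^ (p 2) = 1; exact hpow 0 1 _ h01)
          | (show (S 1 * S 0) ^ (p 2) = 1; exact hswap 0 1 _ (hpow 0 1 _ h01))
          | (show (S 1 * S 2) ^ (p 0) = 1; exact hpow 1 2 _ h12)
          | (show (S 2 * S 1) ^ (p 0) = 1; exact hswap 1 2 _ (hpow 1 2 _ h12))
          | (show (S 2 * S 0) ^ (p 1) = 1; exact hpow 2 0 _ h20)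
          | (show (S 0 * S 2) ^ (p 1) = 1; exact hswap 2 0 _ (hpow 2 0 _ h20))
  let cs := (triangleCoxeterMatrix p hp).toCoxeterSystem
  refine ⟨cs.lift ⟨S, hlift⟩, fun i => ?_, fun ρ' hρ' => ?_⟩
  · rw [show (triangleCoxeterMatrix p hp).simple i = cs.simple i from rfl,
      CoxeterSystem.lift_apply_simple]
  · apply cs.ext_simple
    intro i
    apply Subtype.coe_injective
    rw [CoxeterSystem.lift_apply_simple]
    exact hρ' i
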